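/- Given a query Q and a clause r := H ← c ◇ B, there exists a CLP derivation step of Q with respect to r if and only if Set(Q) ∩ Set(⟨H | c⟩) ≠ ∅. -/

import Mathlib

/- A semantic formalization of CLP(X) queries, clauses, derivation steps,
   filters and derivation-neutrality, following Payet & Mesnard. -/

namespace CLP

variable {V D Pr : Type}

/-- A (semantic) term: its evaluation under every valuation. -/
abbrev Trm (V D : Type) := (V → D) → D
/-- A (semantic) constraint: its truth value under every valuation. -/
abbrev Cns (V D : Type) := (V → D) → Prop

/-- The term consisting of a single variable. -/
def varT (x : V) : Trm V D := fun v => v x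

/-- An atom whose arguments are domain elements. -/
structure Atom (D Pr : Type) where
  pred : Pr
  args : List D

/-- A query ⟨p(t̃) | d⟩. -/
structure Query (V D Pr : Type) where
  pred : Pr
  args : List (Trm V D)
  constr : Cns V D

/-- The set of atoms described by a query: Set(⟨p(t̃) | d⟩) = {p([t̃]_v) | D ⊨_v d}. -/
def Query.descSet (Q : Query V D Pr) : Set (Atom D Pr) :=
  { A | ∃ v : V → D, Q.constr v ∧ A = ⟨Q.pred, Q.args.map (fun t => t v)⟩ }

/-- Applying a renaming (a bijection on variables) to a query. -/
def Query.rename (γ : V ≃ V) (Q : Query V D Pr) : Query V D Pr :=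
  ⟨Q.pred, Q.args.map (fun t v => t (v ∘ γ)), fun v => Q.constr (v ∘ γ)⟩

/-- A term only depends on (is supported by) the variables in `S`. -/
def Trm.supp (t : Trm V D) (S : Set V) : Prop :=
  ∀ v w : V → D, (∀ x ∈ S, v x = w x) → t v = t w

/-- A constraint only depends on (is supported by) the variables in `S`. -/
def Cns.supp (c : Cns V D) (S : Set V) : Prop :=
  ∀ v w : V → D, (∀ x ∈ S, v x = w x) → (c v ↔ c w)

/-- All the variables of the query lie in `S`. -/
def Query.suppBy (Q : Query V D Pr) (S : Set V) : Prop :=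
  (∀ t ∈ Q.args, Trm.supp t S) ∧ Cns.supp Q.constr S

/-- The query has finitely many variables (as every syntactic query does). -/
def Query.finSupp (Q : Query V D Pr) : Prop := ∃ S : Finset V, Q.suppBy ↑S

/-- The constraint s̃ = t̃ (componentwise equality of two sequences of terms). -/
def EqArgs (a b : List (Trm V D)) (v : V → D) : Prop :=
  a.length = b.length ∧ ∀ pr ∈ a.zip b, pr.1 v = pr.2 v

/-- A binary clause H ← c ◇ B. -/
structure Clause (V D Pr : Type) where
  hpred : Pr
  hargs : List (Trm V D)
  constr : Cns V D
  bpred : Pr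
  bargs : List (Trm V D)

/-- The query ⟨H | c⟩. -/
def Clause.headQuery (r : Clause V D Pr) : Query V D Pr := ⟨r.hpred, r.hargs, r.constr⟩
/-- The query ⟨B | c⟩. -/
def Clause.bodyQuery (r : Clause V D Pr) : Query V D Pr := ⟨r.bpred, r.bargs, r.constr⟩

/-- Applying a renaming to a clause (producing a variant of the clause). -/
def Clause.rename (γ : V ≃ V) (r : Clause V D Pr) : Clause V D Pr :=
  ⟨r.hpred, r.hargs.map (fun t v => t (v ∘ γ)), fun v => r.constr (v ∘ γ),
   r.bpred, r.bargs.map (fun t v => t (v ∘ γ))⟩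

/-- All the variables of the clause lie in `S`. -/
def Clause.suppBy (r : Clause V D Pr) (S : Set V) : Prop :=
  (∀ t ∈ r.hargs ++ r.bargs, Trm.supp t S) ∧ Cns.supp r.constr S

/-- The clause has finitely many variables. -/
def Clause.finSupp (r : Clause V D Pr) : Prop := ∃ S : Finset V, r.suppBy ↑S

/-- The constraint s̃ = ũ ∧ c ∧ d of the derived query, where the input clause is
    r' = p(s̃) ← c ◇ q(t̃) and the current query is Q = ⟨p(ũ) | d⟩. -/
def stepCns (r' : Clause V D Pr) (Q : Query V D Pr) : Cns V D :=
  fun v => EqArgs r'.hargs Q.args v ∧ r'.constr v ∧ Q.constr v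

/-- A derivation step Q ⟹_r Q₁: there is a variant r' of r variable-disjoint from Q
    (the input clause) such that the constraint s̃ = ũ ∧ c ∧ d is satisfiable, and
    Q₁ = ⟨q(t̃) | s̃ = ũ ∧ c ∧ d⟩. -/
def Step (r : Clause V D Pr) (Q Q₁ : Query V D Pr) : Prop :=
  ∃ γ : V ≃ V, ∃ S S' : Set V,
    Q.suppBy S ∧ (r.rename γ).suppBy S' ∧ Disjoint S S' ∧
    Q.pred = r.hpred ∧
    (∃ v, stepCns (r.rename γ) Q v) ∧
    Q₁ = ⟨(r.rename γ).bpred, (r.rename γ).bargs, stepCns (r.rename γ) Q⟩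

/-- Q₀ loops w.r.t. the program `Prog`: there is an infinite derivation of Prog ∪ {Q₀}. -/
def Loops (Prog : Set (Clause V D Pr)) (Q₀ : Query V D Pr) : Prop :=
  ∃ Qs : ℕ → Query V D Pr, Qs 0 = Q₀ ∧ ∀ n, ∃ r ∈ Prog, Step r (Qs n) (Qs (n + 1))

/-- Projection of a sequence onto a set of (0-based) positions, in increasing order. -/
def projArgs {α : Type} (s : Finset ℕ) (l : List α) : List α :=
  ((s.filter (· < l.length)).sort (· ≤ ·)).filterMap (fun i => l[i]?)

/-- Projection of a query on a set of positions τ. -/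
def Query.proj (τ : Pr → Finset ℕ) (Q : Query V D Pr) : Query V D Pr :=
  ⟨Q.pred, projArgs (τ Q.pred) Q.args, Q.constr⟩

/-- Projection of a query on the complementary set of positions τ̄. -/
def Query.coproj (τ : Pr → Finset ℕ) (Q : Query V D Pr) : Query V D Pr :=
  ⟨Q.pred, projArgs (Finset.range Q.args.length \ τ Q.pred) Q.args, Q.constr⟩

/-- A filter Δ = (τ, δ): a set of positions together with, for each predicate,
    a query over the projected predicate whose constraint is satisfiable. -/
structure PFilter (V D Pr : Type) where
  pos : Pr → Finset ℕ
  delta : Pr → Query V D Pr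
  delta_pred : ∀ p, (delta p).pred = p
  delta_sat : ∀ p, ∃ v, (delta p).constr v

/-- Q satisfies Δ when Set(Q|_τ) ⊆ Set(δ(rel(Q))). -/
def PFilter.Satisfies (Δ : PFilter V D Pr) (Q : Query V D Pr) : Prop :=
  (Q.proj Δ.pos).descSet ⊆ (Δ.delta Q.pred).descSet

/-- Q' is Δ-more general than Q. -/
def PFilter.MoreGen (Δ : PFilter V D Pr) (Q' Q : Query V D Pr) : Prop :=
  (Q.coproj Δ.pos).descSet ⊆ (Q'.coproj Δ.pos).descSet ∧ Δ.Satisfies Q'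

/-- Δ is derivation neutral (DN) for the clause r. -/
def PFilter.DN (Δ : PFilter V D Pr) (r : Clause V D Pr) : Prop :=
  ∀ Q Q₁ : Query V D Pr, Q.finSupp → Step r Q Q₁ →
    Δ.Satisfies Q₁ ∧
    ∀ Q' : Query V D Pr, Q'.finSupp → Δ.MoreGen Q' Q →
      ∃ Q₁', Step r Q' Q₁' ∧ Δ.MoreGen Q₁' Q₁

/-- sat(ũ, Q): taking a fresh variant of Q and existentially quantifying its variables,
    the values of ũ can be matched with the arguments of Q while its constraint holds. -/
def satC (us : List (Trm V D)) (Q : Query V D Pr) : Cns V D :=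
  fun v => ∃ w : V → D, us.length = Q.args.length ∧
    (∀ pr ∈ us.zip Q.args, pr.1 v = pr.2 w) ∧ Q.constr w

/-- First DNlog condition: D ⊨ c → ∀_{X̃|τ(p)} [sat(X̃|τ(p), δ(p)) → ∃_𝒴 c],
    with 𝒴 = Ỹ|τ(q) ∪ local_vars(r). -/
def DNlog1 (Δ : PFilter V D Pr) (p q : Pr) (Xs Ys : List V) (L : Set V) (c : Cns V D) : Prop :=
  ∀ v : V → D, c v →
    ∀ v' : V → D, (∀ x : V, x ∉ projArgs (Δ.pos p) Xs → v' x = v x) →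
      satC ((projArgs (Δ.pos p) Xs).map varT) (Δ.delta p) v' →
      ∃ w : V → D, (∀ x : V, x ∉ projArgs (Δ.pos q) Ys → x ∉ L → w x = v' x) ∧ c w

/-- Second DNlog condition: D ⊨ c → sat(Ỹ|τ(q), δ(q)). -/
def DNlog2 (Δ : PFilter V D Pr) (q : Pr) (Ys : List V) (c : Cns V D) : Prop :=
  ∀ v : V → D, c v → satC ((projArgs (Δ.pos q) Ys).map varT) (Δ.delta q) v

/-- Δ is DNlog for the clause p(X̃) ← c ◇ q(Ỹ) with local variables L. -/
def DNlog (Δ : PFilter V D Pr) (p q : Pr) (Xs Ys : List V) (L : Set V) (c : Cns V D) : Prop :=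
  DNlog1 Δ p q Xs Ys L c ∧ DNlog2 Δ q Ys c

end CLP

open CLP in
lemma eqArgs_iff {V D : Type} (a b : List (CLP.Trm V D)) (v : V → D) :
    CLP.EqArgs a b v ↔ a.map (fun t => t v) = b.map (fun t => t v) := by
  constructor
  · rintro ⟨hlen, h⟩
    apply List.ext_getElem (by simpa using hlen)
    intro i h1 h2
    simp only [List.getElem_map]
    have hmem : ((a.zip b)[i]'(by simp [List.length_zip]; simp at h1 h2; omega)) ∈ a.zip b :=
      List.getElem_mem _
    rw [List.getElem_zip] at hmem
    exact h _ hmem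
  · intro h
    have hlen : a.length = b.length := by simpa using congrArg List.length h
    refine ⟨hlen, ?_⟩
    intro pr hpr
    obtain ⟨i, hi, hget⟩ := List.getElem_of_mem hpr
    rw [List.getElem_zip] at hget
    have h1 : i < a.length := by simp [List.length_zip] at hi; omega
    have h2 : i < b.length := by omega
    have hq := congrArg (fun l => l[i]?) h
    simp only [List.getElem?_map, List.getElem?_eq_getElem h1,
      List.getElem?_eq_getElem h2, Option.map_some] at hq
    rw [← hget]
    exact Option.some.inj hq

theorem step_iff_inter_nonempty {D Pr : Type} (r : CLP.Clause ℕ D Pr)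
    (Q : CLP.Query ℕ D Pr) (hQ : Q.finSupp) (hr : r.finSupp) :
    (∃ Q₁, CLP.Step r Q Q₁) ↔ (Q.descSet ∩ r.headQuery.descSet).Nonempty := by
  constructor
  · rintro ⟨Q₁, γ, S, S', hS, hS', hdisj, hpred, ⟨v, heq, hc, hd⟩, rfl⟩
    refine ⟨⟨Q.pred, Q.args.map (fun t => t v)⟩, ⟨v, hd, rfl⟩, ⟨v ∘ γ, hc, ?_⟩⟩
    have hmap := (eqArgs_iff _ _ v).1 heq
    simp only [CLP.Clause.rename, List.map_map, Function.comp] at hmap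
    simp only [CLP.Clause.headQuery, CLP.Query.descSet]
    rw [hpred, ← hmap]
    rfl
  · rintro ⟨A, ⟨v, hv, rfl⟩, ⟨w, hw, hA⟩⟩
    have hpred : Q.pred = r.hpred := congrArg CLP.Atom.pred hA
    have hargsEq : Q.args.map (fun t => t v) = r.hargs.map (fun t => t w) :=
      congrArg CLP.Atom.args hA
    obtain ⟨SQ, hSQ⟩ := hQ
    obtain ⟨Sr, hSr⟩ := hr
    set N := (SQ ∪ Sr).sup id + 1 with hNdef
    have hN : ∀ x ∈ SQ ∪ Sr, x < N := fun x hx =>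
      Nat.lt_succ_of_le (Finset.le_sup (f := id) hx)
    have hNQ : ∀ x ∈ SQ, x < N := fun x hx => hN x (Finset.mem_union_left _ hx)
    have hNr : ∀ x ∈ Sr, x < N := fun x hx => hN x (Finset.mem_union_right _ hx)
    have hinv : Function.Involutive
        (fun n : ℕ => if n < N then n + N else if n < 2 * N then n - N else n) := by
      intro n
      simp only
      split_ifs <;> omega
    let γ : ℕ ≃ ℕ := hinv.toPerm
    have hγ : ∀ n, γ n = if n < N then n + N else if n < 2 * N then n - N else n :=
      fun n => rfl
    have hγSr : ∀ x ∈ Sr, γ x = x + N := by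
      intro x hx; rw [hγ]; simp [hNr x hx]
    -- supports of the renamed clause
    have hsupp' : (r.rename γ).suppBy (γ '' ↑Sr) := by
      constructor
      · intro t ht
        simp only [CLP.Clause.rename, ← List.map_append, List.mem_map] at ht
        obtain ⟨t₀, ht₀, rfl⟩ := ht
        intro v' w' hvw
        exact hSr.1 t₀ ht₀ _ _ (fun x hx => hvw (γ x) ⟨x, hx, rfl⟩)
      · intro v' w' hvw
        exact hSr.2 _ _ (fun x hx => hvw (γ x) ⟨x, hx, rfl⟩)
    have hdisj : Disjoint (↑SQ : Set ℕ) (γ '' ↑Sr) := by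
      rw [Set.disjoint_left]
      rintro x hx ⟨y, hy, hxy⟩
      have h1 : x < N := hNQ x hx
      have h2 : γ y = y + N := hγSr y hy
      rw [h2] at hxy
      have h3 : y < N := hNr y hy
      omega
    -- the satisfying valuation
    classical
    let u : ℕ → D := fun n => if n ∈ SQ then v n else w (γ.symm n)
    have huSQ : ∀ x ∈ SQ, u x = v x := by intro x hx; simp [u, hx]
    have huγ : ∀ x ∈ Sr, u (γ x) = w x := by
      intro x hx
      have hγx : γ x = x + N := hγSr x hx
      have : γ x ∉ SQ := by
        intro hmem
        have := hNQ _ hmem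
        omega
      simp [u, this]
    have hsat : CLP.stepCns (r.rename γ) Q u := by
      refine ⟨?_, ?_, ?_⟩
      · rw [eqArgs_iff]
        have e1 : (r.rename γ).hargs.map (fun t => t u)
            = r.hargs.map (fun t => t w) := by
          simp only [CLP.Clause.rename, List.map_map]
          apply List.map_congr_left
          intro t ht
          exact hSr.1 t (List.mem_append_left _ ht) _ _ (fun x hx => huγ x hx)
        have e2 : Q.args.map (fun t => t u) = Q.args.map (fun t => t v) :=
          List.map_congr_left (fun t ht => hSQ.1 t ht _ _ (fun x hx => huSQ x hx))
        rw [e1, e2, hargsEq]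
      · show r.constr (u ∘ γ)
        exact (hSr.2 (u ∘ γ) w (fun x hx => huγ x hx)).2 hw
      · exact (hSQ.2 u v (fun x hx => huSQ x hx)).2 hv
    exact ⟨_, γ, ↑SQ, γ '' ↑Sr, hSQ, hsupp', hdisj, hpred, ⟨u, hsat⟩, rfl⟩
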